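/- If a finite simple graph G admits an edge partition into cliques such that each vertex lies in at most two of the cliques, then the smallest adjacency eigenvalue of G is at least -2. -/

import Mathlib

/-- The smallest eigenvalue of a real symmetric matrix. -/
noncomputable def minEig {n : Type*} [Fintype n] [DecidableEq n] (hn : Nonempty n)
    {A : Matrix n n ℝ} (hA : A.IsHermitian) : ℝ :=
  Finset.univ.inf' (Finset.univ_nonempty_iff.mpr hn) hA.eigenvalues

/-- The adjacency matrix of a graph is Hermitian. -/
lemma adjHerm {V : Type*} [Fintype V] (G : SimpleGraph V) [DecidableRel G.Adj] :
    (G.adjMatrix ℝ).IsHermitian := by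
  ext i j
  simp [Matrix.conjTranspose_apply, SimpleGraph.adj_comm]

/-- If the edge set of a finite simple graph `G` can be partitioned into cliques
(each edge lies in exactly one clique) such that every vertex belongs to at most two
of the cliques, then the smallest adjacency eigenvalue of `G` is at least `-2`. -/
theorem stmt10 {V : Type*} [Fintype V] [DecidableEq V] (hV : Nonempty V)
    (G : SimpleGraph V) [DecidableRel G.Adj] {m : ℕ} (K : Fin m → Finset V)
    (hclique : ∀ j, G.IsClique (K j))
    (hpart : ∀ u v : V, G.Adj u v → ∃! j, u ∈ K j ∧ v ∈ K j)
    (hr : ∀ u : V, (Finset.univ.filter fun j => u ∈ K j).card ≤ 2) :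
    minEig hV (adjHerm G) ≥ -2 := by
  classical
  set A := G.adjMatrix ℝ with hAdef
  -- incidence matrix
  set N : Matrix V (Fin m) ℝ := fun u j => if u ∈ K j then 1 else 0 with hNdef
  set c : V → ℝ := fun u => ((Finset.univ.filter fun j => u ∈ K j).card : ℝ) with hcdef
  -- entries of N * Nᵀ
  have hNN : ∀ u v : V, (N * N.transpose) u v =
      ((Finset.univ.filter fun j => u ∈ K j ∧ v ∈ K j).card : ℝ) := by
    intro u v
    simp only [Matrix.mul_apply, Matrix.transpose_apply]
    simp only [Matrix.mul_apply, Matrix.transpose_apply, hNdef]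
    rw [Finset.card_filter]
    push_cast
    apply Finset.sum_congr rfl
    intro j _
    by_cases h1 : u ∈ K j <;> by_cases h2 : v ∈ K j <;> simp [h1, h2]
  -- the key matrix identity
  have key : A = N * N.transpose + Matrix.diagonal (fun u => 2 - c u)
      - (2 : ℝ) • (1 : Matrix V V ℝ) := by
    ext u v
    rw [Matrix.sub_apply, Matrix.add_apply, hNN]
    by_cases huv : u = v
    · subst huv
      simp only [Matrix.diagonal_apply_eq, Matrix.smul_apply, Matrix.one_apply_eq, smul_eq_mul,
        mul_one, hAdef, SimpleGraph.adjMatrix_apply]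
      have : (Finset.univ.filter fun j => u ∈ K j ∧ u ∈ K j) =
          (Finset.univ.filter fun j => u ∈ K j) := by
        apply Finset.filter_congr; intro j _; simp
      rw [this]
      simp [hcdef, G.irrefl]
    · have hdiag : Matrix.diagonal (fun u => 2 - c u) u v = 0 :=
        Matrix.diagonal_apply_ne _ huv
      have hone : ((2 : ℝ) • (1 : Matrix V V ℝ)) u v = 0 := by
        simp [Matrix.one_apply_ne huv]
      rw [hdiag, hone, add_zero, sub_zero]
      by_cases hadj : G.Adj u v
      · obtain ⟨j, hj, huniq⟩ := hpart u v hadj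
        have : (Finset.univ.filter fun i => u ∈ K i ∧ v ∈ K i) = {j} := by
          ext i
          simp only [Finset.mem_filter, Finset.mem_univ, true_and, Finset.mem_singleton]
          constructor
          · intro h; exact huniq i h
          · rintro rfl; exact hj
        rw [this]
        simp [hAdef, hadj]
      · have : (Finset.univ.filter fun i => u ∈ K i ∧ v ∈ K i) = ∅ := by
          ext i
          simp only [Finset.mem_filter, Finset.mem_univ, true_and, Finset.notMem_empty,
            iff_false]
          rintro ⟨h1, h2⟩
          exact hadj ((hclique i) h1 h2 huv)
        rw [this]
        simp [hAdef, hadj]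
  -- eigenvalue bound
  unfold minEig
  apply Finset.le_inf'
  intro i _
  set x : V → ℝ := ⇑((adjHerm G).eigenvectorBasis i) with hxdef
  have hxnorm : dotProduct x x = 1 := by
    have h1 : ‖(adjHerm G).eigenvectorBasis i‖ = 1 :=
      (adjHerm G).eigenvectorBasis.orthonormal.1 i
    have h2 : (inner ℝ ((adjHerm G).eigenvectorBasis i) ((adjHerm G).eigenvectorBasis i) : ℝ)
        = 1 := by
      rw [real_inner_self_eq_norm_sq, h1]; norm_num
    rw [← h2, EuclideanSpace.inner_eq_star_dotProduct]
    simp [hxdef, dotProduct]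
  have heig : (adjHerm G).eigenvalues i = dotProduct x (A.mulVec x) := by
    have := (adjHerm G).eigenvalues_eq (i := i)
    simpa [hxdef] using this
  have hpsd1 : 0 ≤ dotProduct x ((N * N.transpose).mulVec x) := by
    have := (Matrix.posSemidef_self_mul_conjTranspose N).dotProduct_mulVec_nonneg x
    simpa using this
  have hpsd2 : 0 ≤ dotProduct x ((Matrix.diagonal (fun u => 2 - c u)).mulVec x) := by
    have hd : ∀ u, 0 ≤ 2 - c u := by
      intro u
      have := hr u
      simp only [hcdef]
      have : (((Finset.univ.filter fun j => u ∈ K j).card : ℝ)) ≤ 2 := by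
        exact_mod_cast hr u
      linarith
    have := (Matrix.PosSemidef.diagonal (d := fun u => 2 - c u) hd).dotProduct_mulVec_nonneg x
    simpa using this
  have hform : dotProduct x (A.mulVec x) =
      dotProduct x ((N * N.transpose).mulVec x)
      + dotProduct x ((Matrix.diagonal (fun u => 2 - c u)).mulVec x)
      - 2 * dotProduct x x := by
    rw [key]
    simp [Matrix.sub_mulVec, Matrix.add_mulVec, dotProduct_sub, dotProduct_add,
      Matrix.smul_mulVec, dotProduct_smul, smul_eq_mul]
  rw [heig, hform, hxnorm]
  linarith
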